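/- Let d be an integer with 5 ≤ d ≤ 9, and set γ = (1/2)(6d - 12 - (d+2)√(2d-4)) and δ = √(d-2)/(2√2). Then γ > 0, and the function g₁(y) = y²/(γ + δ y²) satisfies the Yang–Mills shrinker equation g₁''(y) + ((d-3)/y - y/2) g₁'(y) - (d-2)/y² · g₁(y)(g₁(y)-1)(g₁(y)-2) = 0 for all y > 0. -/

import Mathlib

open Real Set Filter Topology

/-- For `5 ≤ d ≤ 9`, with `γ = (1/2)(6d - 12 - (d+2)√(2d-4))` and `δ = √(d-2)/(2√2)`,
one has `γ > 0` and the explicit function `g₁(y) = y²/(γ + δ y²)` solves the Yang–Mills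
shrinker equation for all `y > 0`. -/
theorem explicit_yang_mills_shrinker (d : ℕ) (hd5 : 5 ≤ d) (hd9 : d ≤ 9)
    (γ δ : ℝ)
    (hγ : γ = 1 / 2 * (6 * (d : ℝ) - 12 - ((d : ℝ) + 2) * Real.sqrt (2 * (d : ℝ) - 4)))
    (hδ : δ = Real.sqrt ((d : ℝ) - 2) / (2 * Real.sqrt 2))
    (g₁ : ℝ → ℝ) (hg₁ : g₁ = fun y => y ^ 2 / (γ + δ * y ^ 2)) :
    0 < γ ∧
    ∀ y : ℝ, 0 < y →
      deriv (deriv g₁) y + (((d : ℝ) - 3) / y - y / 2) * deriv g₁ y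
        - ((d : ℝ) - 2) / y ^ 2 * (g₁ y * (g₁ y - 1) * (g₁ y - 2)) = 0 := by
  have hd5' : (5:ℝ) ≤ (d:ℝ) := by exact_mod_cast hd5
  have hd9' : (d:ℝ) ≤ 9 := by exact_mod_cast hd9
  have hdm2 : (0:ℝ) ≤ (d:ℝ) - 2 := by linarith
  have h2 : Real.sqrt 2 * Real.sqrt 2 = 2 := Real.mul_self_sqrt (by norm_num)
  have h2pos : (0:ℝ) < Real.sqrt 2 := Real.sqrt_pos.mpr (by norm_num)
  have hδ0 : 0 ≤ δ := by
    rw [hδ]; positivity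
  have hδ2 : δ ^ 2 = ((d:ℝ) - 2) / 8 := by
    rw [hδ, div_pow, mul_pow, Real.sq_sqrt hdm2, Real.sq_sqrt (by norm_num : (0:ℝ) ≤ 2)]
    norm_num
  have hs : Real.sqrt (2 * (d:ℝ) - 4) = 4 * δ := by
    rw [hδ, show (2:ℝ) * (d:ℝ) - 4 = 2 * ((d:ℝ) - 2) by ring,
      Real.sqrt_mul (by norm_num : (0:ℝ) ≤ 2)]
    field_simp
    linear_combination 2 * Real.sqrt ((d:ℝ) - 2) * h2
  have hγ' : γ = 3 * ((d:ℝ) - 2) - 2 * ((d:ℝ) + 2) * δ := by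
    rw [hγ, hs]; ring
  have hγpos : 0 < γ := by
    rw [hγ']
    nlinarith [sq_nonneg δ, hδ2, hδ0, sq_nonneg ((d:ℝ) - 7), mul_nonneg hδ0 hδ0,
      sq_nonneg (δ - 1), sq_nonneg (2*((d:ℝ)+2)*δ - 3*((d:ℝ)-2))]
  refine ⟨hγpos, ?_⟩
  have hD : ∀ y : ℝ, 0 < γ + δ * y ^ 2 := fun y => by positivity
  have hDne : ∀ y : ℝ, γ + δ * y ^ 2 ≠ 0 := fun y => (hD y).ne'
  have hden : ∀ y : ℝ, HasDerivAt (fun y : ℝ => γ + δ * y ^ 2) (2 * δ * y) y := by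
    intro y
    have := ((hasDerivAt_pow 2 y).const_mul δ).const_add γ
    simpa [mul_comm, mul_assoc, mul_left_comm] using this
  have hg' : ∀ y : ℝ, HasDerivAt g₁ (2 * γ * y / (γ + δ * y ^ 2) ^ 2) y := by
    intro y
    rw [hg₁]
    have h := (hasDerivAt_pow 2 y).fun_div (hden y) (hDne y)
    refine h.congr_deriv ?_
    congr 1
    push_cast
    ring
  have hderiv1 : deriv g₁ = fun y => 2 * γ * y / (γ + δ * y ^ 2) ^ 2 :=
    funext fun y => (hg' y).deriv
  have hg'' : ∀ y : ℝ, HasDerivAt (fun y => 2 * γ * y / (γ + δ * y ^ 2) ^ 2)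
      (2 * γ * ((γ + δ * y ^ 2) - 4 * δ * y ^ 2) / (γ + δ * y ^ 2) ^ 3) y := by
    intro y
    have hnum : HasDerivAt (fun y : ℝ => 2 * γ * y) (2 * γ) y := by
      simpa using (hasDerivAt_id y).const_mul (2 * γ)
    have hden2 : HasDerivAt (fun y : ℝ => (γ + δ * y ^ 2) ^ 2)
        (2 * (γ + δ * y ^ 2) * (2 * δ * y)) y := by
      have := (hden y).fun_pow 2
      simpa [mul_comm, mul_assoc, mul_left_comm] using this
    have h := hnum.fun_div hden2 (pow_ne_zero 2 (hDne y))
    refine h.congr_deriv ?_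
    have := hDne y
    rw [div_eq_div_iff (pow_ne_zero 2 (pow_ne_zero 2 this)) (pow_ne_zero 3 this)]
    ring
  intro y hy
  have hyne : y ≠ 0 := hy.ne'
  rw [hderiv1, (hg'' y).deriv, hg₁]
  simp only
  have hDy := hDne y
  have key : 2 * γ * (γ + δ * y ^ 2 - 4 * δ * y ^ 2) / (γ + δ * y ^ 2) ^ 3 +
      (((d : ℝ) - 3) / y - y / 2) * (2 * γ * y / (γ + δ * y ^ 2) ^ 2) -
      ((d : ℝ) - 2) / y ^ 2 *
        (y ^ 2 / (γ + δ * y ^ 2) * (y ^ 2 / (γ + δ * y ^ 2) - 1) *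
          (y ^ 2 / (γ + δ * y ^ 2) - 2)) =
      (-(γ - (3 * ((d:ℝ) - 2) - 2 * ((d:ℝ) + 2) * δ)) * (y ^ 2 * γ + y ^ 4 * δ) +
        8 * y ^ 4 * (δ ^ 2 - ((d:ℝ) - 2) / 8)) / (γ + δ * y ^ 2) ^ 3 := by
    field_simp
    ring
  rw [key, hγ', hδ2]
  simp
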